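/- Refinement preserves implementations: let C' = (A', G') and C = (A, G) be contracts such that C' refines C. If a system Σ in driving variable form is an implementation of C', then Σ is also an implementation of C. -/

import Mathlib

/-- A linear system in driving variable form `ẋ = A x + G d`, `w = C x`, `0 = H x`. -/
structure DVSystem (X W D Y : Type)
    [AddCommGroup X] [Module ℝ X] [AddCommGroup W] [Module ℝ W]
    [AddCommGroup D] [Module ℝ D] [AddCommGroup Y] [Module ℝ Y] where
  A : X →ₗ[ℝ] X
  G : D →ₗ[ℝ] X
  C : X →ₗ[ℝ] W
  H : X →ₗ[ℝ] Y

namespace DVSystem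

section basic

variable {X W D Y : Type}
  [AddCommGroup X] [Module ℝ X] [AddCommGroup W] [Module ℝ W]
  [AddCommGroup D] [Module ℝ D] [AddCommGroup Y] [Module ℝ Y]

/-- A subspace `U` is consistent-admissible if `A U ⊆ U + im G` and `U ⊆ ker H`. -/
def Admissible (P : DVSystem X W D Y) (U : Submodule ℝ X) : Prop :=
  U.map P.A ≤ U ⊔ LinearMap.range P.G ∧ U ≤ LinearMap.ker P.H

/-- The consistent subspace `V*`: the largest consistent-admissible subspace. -/
def V (P : DVSystem X W D Y) : Submodule ℝ X :=
  sSup {U | P.Admissible U}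

end basic

section sim

variable {W : Type} [AddCommGroup W] [Module ℝ W]
variable {X₁ D₁ Y₁ : Type} [AddCommGroup X₁] [Module ℝ X₁]
  [AddCommGroup D₁] [Module ℝ D₁] [AddCommGroup Y₁] [Module ℝ Y₁]
variable {X₂ D₂ Y₂ : Type} [AddCommGroup X₂] [Module ℝ X₂]
  [AddCommGroup D₂] [Module ℝ D₂] [AddCommGroup Y₂] [Module ℝ Y₂]

/-- Items (i)-(ii) of the (algebraic) definition of a simulation relation. -/
def SimConds (P₁ : DVSystem X₁ W D₁ Y₁) (P₂ : DVSystem X₂ W D₂ Y₂)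
    (S : Submodule ℝ (X₁ × X₂)) : Prop :=
  ∀ x₁ x₂, (x₁, x₂) ∈ S →
    (∀ d₁ : D₁, P₁.A x₁ + P₁.G d₁ ∈ P₁.V →
      ∃ d₂ : D₂, P₂.A x₂ + P₂.G d₂ ∈ P₂.V ∧
        (P₁.A x₁ + P₁.G d₁, P₂.A x₂ + P₂.G d₂) ∈ S) ∧
    P₁.C x₁ = P₂.C x₂

/-- `S` is a simulation relation of `P₁` by `P₂`. -/
def IsSimRel (P₁ : DVSystem X₁ W D₁ Y₁) (P₂ : DVSystem X₂ W D₂ Y₂)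
    (S : Submodule ℝ (X₁ × X₂)) : Prop :=
  S.map (LinearMap.fst ℝ X₁ X₂) ≤ P₁.V ∧ S.map (LinearMap.snd ℝ X₁ X₂) ≤ P₂.V ∧
    SimConds P₁ P₂ S

/-- `S` is a full simulation relation of `P₁` by `P₂`: in addition `π₁(S) = V₁*`. -/
def IsFullSimRel (P₁ : DVSystem X₁ W D₁ Y₁) (P₂ : DVSystem X₂ W D₂ Y₂)
    (S : Submodule ℝ (X₁ × X₂)) : Prop :=
  IsSimRel P₁ P₂ S ∧ S.map (LinearMap.fst ℝ X₁ X₂) = P₁.V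

/-- `P₁ ≼ P₂`: `P₁` is simulated by `P₂`. -/
def Simulates (P₁ : DVSystem X₁ W D₁ Y₁) (P₂ : DVSystem X₂ W D₂ Y₂) : Prop :=
  ∃ S : Submodule ℝ (X₁ × X₂), IsFullSimRel P₁ P₂ S

/-- The composition `P₁ ∘ P₂` obtained by sharing the external variable `w₁ = w₂`. -/
noncomputable def comp (P₁ : DVSystem X₁ W D₁ Y₁) (P₂ : DVSystem X₂ W D₂ Y₂) :
    DVSystem (X₁ × X₂) W (D₁ × D₂) (Y₁ × Y₂ × W) where
  A := P₁.A.prodMap P₂.A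
  G := P₁.G.prodMap P₂.G
  C := (1/2 : ℝ) • (P₁.C ∘ₗ LinearMap.fst ℝ X₁ X₂ + P₂.C ∘ₗ LinearMap.snd ℝ X₁ X₂)
  H := (P₁.H ∘ₗ LinearMap.fst ℝ X₁ X₂).prod
    ((P₂.H ∘ₗ LinearMap.snd ℝ X₁ X₂).prod
      (P₁.C ∘ₗ LinearMap.fst ℝ X₁ X₂ - P₂.C ∘ₗ LinearMap.snd ℝ X₁ X₂))

end sim

section relcomp

variable {X₁ X₂ X₃ : Type} [AddCommGroup X₁] [Module ℝ X₁]
  [AddCommGroup X₂] [Module ℝ X₂] [AddCommGroup X₃] [Module ℝ X₃]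

/-- Composition of linear relations:
`{(x₁, x₃) | ∃ x₂, (x₁, x₂) ∈ S₁₂ ∧ (x₂, x₃) ∈ S₂₃}`. -/
def relComp (S₁₂ : Submodule ℝ (X₁ × X₂)) (S₂₃ : Submodule ℝ (X₂ × X₃)) :
    Submodule ℝ (X₁ × X₃) where
  carrier := {p | ∃ x₂, (p.1, x₂) ∈ S₁₂ ∧ (x₂, p.2) ∈ S₂₃}
  zero_mem' := ⟨0, by exact S₁₂.zero_mem, by exact S₂₃.zero_mem⟩
  add_mem' := by
    rintro a b ⟨y, hy1, hy2⟩ ⟨z, hz1, hz2⟩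
    exact ⟨y + z, S₁₂.add_mem hy1 hz1, S₂₃.add_mem hy2 hz2⟩
  smul_mem' := by
    rintro c a ⟨y, h1, h2⟩
    exact ⟨c • y, S₁₂.smul_mem c h1, S₂₃.smul_mem c h2⟩

/-- The pairing `{(x, (x₁, x₂)) | (x, x₁) ∈ S₁ ∧ (x, x₂) ∈ S₂}` of two relations. -/
def pairRel (S₁ : Submodule ℝ (X₁ × X₂)) (S₂ : Submodule ℝ (X₁ × X₃)) :
    Submodule ℝ (X₁ × X₂ × X₃) where
  carrier := {p | (p.1, p.2.1) ∈ S₁ ∧ (p.1, p.2.2) ∈ S₂}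
  zero_mem' := ⟨by exact S₁.zero_mem, by exact S₂.zero_mem⟩
  add_mem' := by
    rintro a b ⟨ha1, ha2⟩ ⟨hb1, hb2⟩
    exact ⟨S₁.add_mem ha1 hb1, S₂.add_mem ha2 hb2⟩
  smul_mem' := by
    rintro c a ⟨h1, h2⟩
    exact ⟨S₁.smul_mem c h1, S₂.smul_mem c h2⟩

end relcomp

section contract

variable {W : Type} [AddCommGroup W] [Module ℝ W]
variable {X D Y Xa Da Ya Xg Dg Yg : Type}
  [AddCommGroup X] [Module ℝ X] [AddCommGroup D] [Module ℝ D]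
  [AddCommGroup Y] [Module ℝ Y]
  [AddCommGroup Xa] [Module ℝ Xa] [AddCommGroup Da] [Module ℝ Da]
  [AddCommGroup Ya] [Module ℝ Ya]
  [AddCommGroup Xg] [Module ℝ Xg] [AddCommGroup Dg] [Module ℝ Dg]
  [AddCommGroup Yg] [Module ℝ Yg]

/-- `Sys` implements the contract `(Ass, Gar)` if `E ∘ Sys ≼ Gar` for every
compatible environment `E`, i.e., every environment with `E ≼ Ass`. -/
def Implements (Sys : DVSystem X W D Y)
    (Ass : DVSystem Xa W Da Ya) (Gar : DVSystem Xg W Dg Yg) : Prop :=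
  ∀ (Xe De Ye : Type) [AddCommGroup Xe] [Module ℝ Xe] [FiniteDimensional ℝ Xe]
    [AddCommGroup De] [Module ℝ De] [FiniteDimensional ℝ De]
    [AddCommGroup Ye] [Module ℝ Ye] [FiniteDimensional ℝ Ye]
    (E : DVSystem Xe W De Ye),
    Simulates E Ass → Simulates (comp E Sys) Gar

end contract

section refine

variable {W : Type} [AddCommGroup W] [Module ℝ W]
variable {Xa Da Ya Xg Dg Yg Xa' Da' Ya' Xg' Dg' Yg' : Type}
  [AddCommGroup Xa] [Module ℝ Xa] [AddCommGroup Da] [Module ℝ Da]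
  [AddCommGroup Ya] [Module ℝ Ya]
  [AddCommGroup Xg] [Module ℝ Xg] [AddCommGroup Dg] [Module ℝ Dg]
  [AddCommGroup Yg] [Module ℝ Yg]
  [AddCommGroup Xa'] [Module ℝ Xa'] [AddCommGroup Da'] [Module ℝ Da']
  [AddCommGroup Ya'] [Module ℝ Ya']
  [AddCommGroup Xg'] [Module ℝ Xg'] [AddCommGroup Dg'] [Module ℝ Dg']
  [AddCommGroup Yg'] [Module ℝ Yg']

/-- The contract `(Ass', Gar')` refines the contract `(Ass, Gar)`:
`Ass ≼ Ass'` and `Ass ∘ Gar' ≼ Gar`. -/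
def Refines (Ass' : DVSystem Xa' W Da' Ya') (Gar' : DVSystem Xg' W Dg' Yg')
    (Ass : DVSystem Xa W Da Ya) (Gar : DVSystem Xg W Dg Yg) : Prop :=
  Simulates Ass Ass' ∧ Simulates (comp Ass Gar') Gar

end refine

end DVSystem

open DVSystem

section Aux

variable {W : Type} [AddCommGroup W] [Module ℝ W]

section basicAux
variable {X D Y : Type} [AddCommGroup X] [Module ℝ X]
  [AddCommGroup D] [Module ℝ D] [AddCommGroup Y] [Module ℝ Y]

lemma admissible_V (P : DVSystem X W D Y) : P.Admissible P.V := by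
  constructor
  · rw [DVSystem.V, sSup_eq_iSup', Submodule.map_iSup]
    exact iSup_le fun U => U.2.1.trans
      (sup_le_sup_right (le_iSup (fun a : {U | P.Admissible U} => (a : Submodule ℝ X)) U) _)
  · exact sSup_le fun U hU => hU.2

lemma le_V {P : DVSystem X W D Y} {U : Submodule ℝ X} (h : P.Admissible U) : U ≤ P.V :=
  le_sSup h

lemma V_step {P : DVSystem X W D Y} {x : X} (hx : x ∈ P.V) :
    ∃ d, P.A x + P.G d ∈ P.V := by
  have h := (admissible_V P).1 (Submodule.mem_map_of_mem hx)
  rw [Submodule.mem_sup] at h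
  obtain ⟨y, hy, z, ⟨d, rfl⟩, hyz⟩ := h
  refine ⟨-d, ?_⟩
  rw [map_neg, ← hyz]
  simpa using hy

lemma V_ker {P : DVSystem X W D Y} {x : X} (hx : x ∈ P.V) : P.H x = 0 :=
  (admissible_V P).2 hx

end basicAux

section compAux

variable {X₁ D₁ Y₁ : Type} [AddCommGroup X₁] [Module ℝ X₁]
  [AddCommGroup D₁] [Module ℝ D₁] [AddCommGroup Y₁] [Module ℝ Y₁]
variable {X₂ D₂ Y₂ : Type} [AddCommGroup X₂] [Module ℝ X₂]
  [AddCommGroup D₂] [Module ℝ D₂] [AddCommGroup Y₂] [Module ℝ Y₂]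
variable {X₃ D₃ Y₃ : Type} [AddCommGroup X₃] [Module ℝ X₃]
  [AddCommGroup D₃] [Module ℝ D₃] [AddCommGroup Y₃] [Module ℝ Y₃]

lemma simulates_trans (P₁ : DVSystem X₁ W D₁ Y₁) (P₂ : DVSystem X₂ W D₂ Y₂)
    (P₃ : DVSystem X₃ W D₃ Y₃) (h12 : P₁.Simulates P₂) (h23 : P₂.Simulates P₃) :
    P₁.Simulates P₃ := by
  obtain ⟨S₁, ⟨⟨hS1f, hS1s, hS1c⟩, hS1full⟩⟩ := h12
  obtain ⟨S₂, ⟨⟨hS2f, hS2s, hS2c⟩, hS2full⟩⟩ := h23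
  refine ⟨DVSystem.relComp S₁ S₂, ⟨⟨?_, ?_, ?_⟩, ?_⟩⟩
  · rintro _ ⟨p, ⟨x₂, h1, _⟩, rfl⟩
    exact hS1f ⟨(p.1, x₂), h1, rfl⟩
  · rintro _ ⟨p, ⟨x₂, _, h2⟩, rfl⟩
    exact hS2s ⟨(x₂, p.2), h2, rfl⟩
  · rintro x₁ x₃ ⟨x₂, h12m, h23m⟩
    constructor
    · intro d₁ hd₁
      obtain ⟨d₂, hd₂V, hd₂S⟩ := (hS1c x₁ x₂ h12m).1 d₁ hd₁
      obtain ⟨d₃, hd₃V, hd₃S⟩ := (hS2c x₂ x₃ h23m).1 d₂ hd₂V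
      exact ⟨d₃, hd₃V, ⟨_, hd₂S, hd₃S⟩⟩
    · exact ((hS1c x₁ x₂ h12m).2).trans ((hS2c x₂ x₃ h23m).2)
  · apply le_antisymm
    · rintro _ ⟨p, ⟨x₂, h1, _⟩, rfl⟩
      exact hS1f ⟨(p.1, x₂), h1, rfl⟩
    · intro x₁ hx₁
      rw [← hS1full] at hx₁
      obtain ⟨p, hp, rfl⟩ := hx₁
      have hx₂ : p.2 ∈ S₂.map (LinearMap.fst ℝ X₂ X₃) := by
        rw [hS2full]
        exact hS1s (Submodule.mem_map_of_mem hp)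
      obtain ⟨q, hq, hq1⟩ := hx₂
      refine ⟨(p.1, q.2), ⟨p.2, hp, ?_⟩, rfl⟩
      show (p.2, q.2) ∈ S₂
      rw [← hq1]
      exact hq

lemma comp_V_fst (P₁ : DVSystem X₁ W D₁ Y₁) (P₂ : DVSystem X₂ W D₂ Y₂) :
    (P₁.comp P₂).V.map (LinearMap.fst ℝ X₁ X₂) ≤ P₁.V := by
  apply le_V
  constructor
  · rintro _ ⟨_, ⟨p, hp, rfl⟩, rfl⟩
    have h := (admissible_V (P₁.comp P₂)).1 (Submodule.mem_map_of_mem hp)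
    rw [Submodule.mem_sup] at h
    obtain ⟨y, hy, z, ⟨d, rfl⟩, hyz⟩ := h
    rw [Submodule.mem_sup]
    refine ⟨y.1, ⟨y, hy, rfl⟩, P₁.G d.1, ⟨d.1, rfl⟩, ?_⟩
    have := congrArg Prod.fst hyz
    simpa [DVSystem.comp] using this
  · rintro _ ⟨p, hp, rfl⟩
    have h := V_ker hp
    simp only [DVSystem.comp, LinearMap.prod_apply, Function.prod, LinearMap.comp_apply, Prod.mk_eq_zero] at h
    exact h.1

lemma comp_V_C {P₁ : DVSystem X₁ W D₁ Y₁} {P₂ : DVSystem X₂ W D₂ Y₂}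
    {p : X₁ × X₂} (hp : p ∈ (P₁.comp P₂).V) : P₁.C p.1 = P₂.C p.2 := by
  have h := V_ker hp
  simp only [DVSystem.comp, LinearMap.prod_apply, Function.prod, LinearMap.comp_apply,
    LinearMap.sub_apply, LinearMap.fst_apply, LinearMap.snd_apply, Prod.mk_eq_zero] at h
  exact sub_eq_zero.mp h.2.2

lemma comp_C_apply (P₁ : DVSystem X₁ W D₁ Y₁) (P₂ : DVSystem X₂ W D₂ Y₂)
    (p : X₁ × X₂) : (P₁.comp P₂).C p = (1/2 : ℝ) • (P₁.C p.1 + P₂.C p.2) := by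
  simp [DVSystem.comp]

lemma comp_C_of_mem_V {P₁ : DVSystem X₁ W D₁ Y₁} {P₂ : DVSystem X₂ W D₂ Y₂}
    {p : X₁ × X₂} (hp : p ∈ (P₁.comp P₂).V) : (P₁.comp P₂).C p = P₁.C p.1 := by
  rw [comp_C_apply, ← comp_V_C hp]
  rw [← two_smul ℝ (P₁.C p.1), smul_smul]
  norm_num

end compAux

section mixAux

variable {Xe De Ye : Type} [AddCommGroup Xe] [Module ℝ Xe]
  [AddCommGroup De] [Module ℝ De] [AddCommGroup Ye] [Module ℝ Ye]
variable {Xp Dp Yp : Type} [AddCommGroup Xp] [Module ℝ Xp]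
  [AddCommGroup Dp] [Module ℝ Dp] [AddCommGroup Yp] [Module ℝ Yp]
variable {Xa Da Ya : Type} [AddCommGroup Xa] [Module ℝ Xa]
  [AddCommGroup Da] [Module ℝ Da] [AddCommGroup Ya] [Module ℝ Ya]
variable {Xg Dg Yg : Type} [AddCommGroup Xg] [Module ℝ Xg]
  [AddCommGroup Dg] [Module ℝ Dg] [AddCommGroup Yg] [Module ℝ Yg]

/-- The mixed relation used to lift simulations to compositions. -/
def mixRel (S₁ : Submodule ℝ (Xe × Xa)) (S₂ : Submodule ℝ ((Xe × Xp) × Xg)) :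
    Submodule ℝ ((Xe × Xp) × (Xa × Xg)) where
  carrier := {q | (q.1.1, q.2.1) ∈ S₁ ∧ (q.1, q.2.2) ∈ S₂}
  zero_mem' := ⟨S₁.zero_mem, S₂.zero_mem⟩
  add_mem' := fun ha hb => ⟨S₁.add_mem ha.1 hb.1, S₂.add_mem ha.2 hb.2⟩
  smul_mem' := fun c a h => ⟨S₁.smul_mem c h.1, S₂.smul_mem c h.2⟩

lemma comp_sim (E : DVSystem Xe W De Ye) (P : DVSystem Xp W Dp Yp)
    (A : DVSystem Xa W Da Ya) (Gp : DVSystem Xg W Dg Yg)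
    (hEA : E.Simulates A) (hS : (E.comp P).Simulates Gp) :
    (E.comp P).Simulates (A.comp Gp) := by
  obtain ⟨S₁, ⟨⟨hS1f, hS1s, hS1c⟩, hS1full⟩⟩ := hEA
  obtain ⟨S₂, ⟨⟨hS2f, hS2s, hS2c⟩, hS2full⟩⟩ := hS
  set R : Submodule ℝ ((Xe × Xp) × (Xa × Xg)) := mixRel S₁ S₂ with hR
  -- basic membership facts
  have hRfstV : ∀ q ∈ R, q.1 ∈ (E.comp P).V := fun q hq => hS2f (Submodule.mem_map_of_mem hq.2)
  -- the key step property
  have step : ∀ q ∈ R, ∀ d : De × Dp,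
      (E.comp P).A q.1 + (E.comp P).G d ∈ (E.comp P).V →
      ∃ d' : Da × Dg,
        ((E.comp P).A q.1 + (E.comp P).G d,
          (A.comp Gp).A q.2 + (A.comp Gp).G d') ∈ R := by
    rintro ⟨⟨xe, xp⟩, ⟨xa, xg⟩⟩ ⟨hq1, hq2⟩ d hd
    obtain ⟨dg, hdgV, hdgS⟩ := (hS2c (xe, xp) xg hq2).1 d hd
    have hEsucc : E.A xe + E.G d.1 ∈ E.V := by
      apply comp_V_fst E P
      exact ⟨(E.comp P).A (xe, xp) + (E.comp P).G d, hd, rfl⟩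
    obtain ⟨da, hdaV, hdaS⟩ := (hS1c xe xa hq1).1 d.1 hEsucc
    refine ⟨(da, dg), ?_, ?_⟩
    · show (_, _) ∈ S₁
      exact hdaS
    · show (_, _) ∈ S₂
      exact hdgS
  -- the projection of R is admissible for the composed system
  have hUadm : (A.comp Gp).Admissible (R.map (LinearMap.snd ℝ (Xe × Xp) (Xa × Xg))) := by
    constructor
    · rintro _ ⟨_, ⟨q, hq, rfl⟩, rfl⟩
      obtain ⟨d, hd⟩ := V_step (hRfstV q hq)
      obtain ⟨d', hd'⟩ := step q hq d hd
      rw [Submodule.mem_sup]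
      refine ⟨(A.comp Gp).A q.2 + (A.comp Gp).G d',
        Submodule.mem_map_of_mem hd', -((A.comp Gp).G d'),
        neg_mem (LinearMap.mem_range_self _ d'), by abel⟩
    · rintro _ ⟨q, hq, rfl⟩
      have hxa : q.2.1 ∈ A.V := hS1s ⟨(q.1.1, q.2.1), hq.1, rfl⟩
      have hxg : q.2.2 ∈ Gp.V := hS2s ⟨(q.1, q.2.2), hq.2, rfl⟩
      have hCa : E.C q.1.1 = A.C q.2.1 := (hS1c q.1.1 q.2.1 hq.1).2
      have hCg : (E.comp P).C q.1 = Gp.C q.2.2 := (hS2c q.1 q.2.2 hq.2).2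
      have hCE : (E.comp P).C q.1 = E.C q.1.1 := comp_C_of_mem_V (hRfstV q hq)
      simp only [DVSystem.comp, LinearMap.mem_ker, LinearMap.prod_apply, Function.prod,
        LinearMap.comp_apply, LinearMap.sub_apply, LinearMap.fst_apply, LinearMap.snd_apply,
        Prod.mk_eq_zero]
      refine ⟨V_ker hxa, V_ker hxg, ?_⟩
      rw [← hCa, ← hCg, hCE, sub_self]
  have hUV : R.map (LinearMap.snd ℝ (Xe × Xp) (Xa × Xg)) ≤ (A.comp Gp).V := le_V hUadm
  refine ⟨R, ⟨⟨?_, hUV, ?_⟩, ?_⟩⟩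
  · rintro _ ⟨q, hq, rfl⟩
    exact hRfstV q hq
  · rintro p a hpa
    constructor
    · intro d hd
      obtain ⟨d', hd'⟩ := step (p, a) hpa d hd
      exact ⟨d', hUV ⟨_, hd', rfl⟩, hd'⟩
    · have hCa : E.C p.1 = A.C a.1 := (hS1c p.1 a.1 hpa.1).2
      have hCE : (E.comp P).C p = E.C p.1 := comp_C_of_mem_V (hRfstV (p, a) hpa)
      have haV : a ∈ (A.comp Gp).V := hUV (Submodule.mem_map_of_mem hpa)
      rw [hCE, comp_C_of_mem_V haV]
      exact hCa
  · apply le_antisymm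
    · rintro _ ⟨q, hq, rfl⟩
      exact hRfstV q hq
    · intro p hp
      have hp2 : p ∈ S₂.map (LinearMap.fst ℝ (Xe × Xp) Xg) := by rw [hS2full]; exact hp
      obtain ⟨q, hq, hq1⟩ := hp2
      have hp1 : p.1 ∈ S₁.map (LinearMap.fst ℝ Xe Xa) := by
        rw [hS1full]
        exact comp_V_fst E P (Submodule.mem_map_of_mem hp)
      obtain ⟨r, hr, hr1⟩ := hp1
      refine ⟨(p, (r.2, q.2)), ⟨?_, ?_⟩, rfl⟩
      · show (p.1, r.2) ∈ S₁
        rw [← hr1]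
        exact hr
      · show (p, q.2) ∈ S₂
        rw [← hq1]
        exact hq

end mixAux

end Aux

/-- Refinement preserves implementations: if `(Ass', Gar')` refines `(Ass, Gar)` and
`Σ` implements `(Ass', Gar')`, then `Σ` implements `(Ass, Gar)`. -/


theorem refines_implements {W : Type} [AddCommGroup W] [Module ℝ W] [FiniteDimensional ℝ W]
    {X D Y : Type} [AddCommGroup X] [Module ℝ X] [FiniteDimensional ℝ X]
    [AddCommGroup D] [Module ℝ D] [FiniteDimensional ℝ D]
    [AddCommGroup Y] [Module ℝ Y] [FiniteDimensional ℝ Y]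
    {Xa Da Ya : Type} [AddCommGroup Xa] [Module ℝ Xa] [FiniteDimensional ℝ Xa]
    [AddCommGroup Da] [Module ℝ Da] [FiniteDimensional ℝ Da]
    [AddCommGroup Ya] [Module ℝ Ya] [FiniteDimensional ℝ Ya]
    {Xg Dg Yg : Type} [AddCommGroup Xg] [Module ℝ Xg] [FiniteDimensional ℝ Xg]
    [AddCommGroup Dg] [Module ℝ Dg] [FiniteDimensional ℝ Dg]
    [AddCommGroup Yg] [Module ℝ Yg] [FiniteDimensional ℝ Yg]
    {Xa2 Da2 Ya2 : Type} [AddCommGroup Xa2] [Module ℝ Xa2] [FiniteDimensional ℝ Xa2]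
    [AddCommGroup Da2] [Module ℝ Da2] [FiniteDimensional ℝ Da2]
    [AddCommGroup Ya2] [Module ℝ Ya2] [FiniteDimensional ℝ Ya2]
    {Xg2 Dg2 Yg2 : Type} [AddCommGroup Xg2] [Module ℝ Xg2] [FiniteDimensional ℝ Xg2]
    [AddCommGroup Dg2] [Module ℝ Dg2] [FiniteDimensional ℝ Dg2]
    [AddCommGroup Yg2] [Module ℝ Yg2] [FiniteDimensional ℝ Yg2]
    (Sys : DVSystem X W D Y)
    (Ass' : DVSystem Xa2 W Da2 Ya2) (Gar' : DVSystem Xg2 W Dg2 Yg2)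
    (Ass : DVSystem Xa W Da Ya) (Gar : DVSystem Xg W Dg Yg)
    (href : Refines Ass' Gar' Ass Gar)
    (himp : Implements Sys Ass' Gar') :
    Implements Sys Ass Gar := by
  intro Xe De Ye _ _ _ _ _ _ _ _ _ E hEAss
  have hEA' : E.Simulates Ass' := simulates_trans E Ass Ass' hEAss href.1
  have h1 : (E.comp Sys).Simulates Gar' := himp Xe De Ye E hEA'
  have h2 : (E.comp Sys).Simulates (Ass.comp Gar') := comp_sim E Sys Ass Gar' hEAss h1
  exact simulates_trans _ _ _ h2 href.2
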